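/- For every δ ∈ ℝ^{J−1} and every j ∈ {1,…,J−1}, the partial derivative of T_j with respect to δ_j exists and satisfies ∂T_j/∂δ_j(δ) = 1 − (1/ms*_j(δ)) · Σ_{k=1}^K d_k 𝒫^k_j(δ)(1 − 𝒫^k_j(δ)), and this quantity is nonnegative. -/

import Mathlib

/-- Diagonal-derivative step in the proof of Lemma 2: for every `δ` and every inside
good `j`, the partial derivative of `T_j` with respect to `δ_j` exists, equals
`1 - (1/ms*_j(δ)) · Σ_k d_k 𝒫^k_j(δ)(1 - 𝒫^k_j(δ))`, and is nonnegative. -/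
theorem stmt_1
    (n K : ℕ) (hn : 1 ≤ n) (hK : 1 ≤ K)
    (d : Fin K → ℝ) (hd0 : ∀ k, 0 ≤ d k) (hd1 : ∑ k, d k = 1)
    (P : Fin K → Fin (n + 1) → ℝ)
    (hP0 : ∀ k j, 0 < P k j) (hP1 : ∀ k, ∑ j, P k j = 1)
    (u : Fin (n + 1) → Fin K → ℝ) (hu : ∀ k, u (Fin.last n) k = 0)
    (ms : Fin (n + 1) → ℝ) (hms0 : ∀ j, 0 < ms j) (hms1 : ∑ j, ms j = 1)
    (Pcond : (Fin n → ℝ) → Fin K → Fin (n + 1) → ℝ)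
    (hPcond : ∀ δ k j, Pcond δ k j =
      P k j * Real.exp ((Fin.snoc δ 0 : Fin (n + 1) → ℝ) j + u j k) /
        ∑ l, P k l * Real.exp ((Fin.snoc δ 0 : Fin (n + 1) → ℝ) l + u l k))
    (msStar : (Fin n → ℝ) → Fin (n + 1) → ℝ)
    (hmsStar : ∀ δ j, msStar δ j = ∑ k, d k * Pcond δ k j)
    (T : (Fin n → ℝ) → Fin n → ℝ)
    (hT : ∀ δ j, T δ j = δ j + Real.log (ms j.castSucc) - Real.log (msStar δ j.castSucc)) :
    ∀ (δ : Fin n → ℝ) (j : Fin n),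
      HasDerivAt (fun t : ℝ => T (Function.update δ j t) j)
        (1 - (1 / msStar δ j.castSucc) *
          ∑ k, d k * Pcond δ k j.castSucc * (1 - Pcond δ k j.castSucc)) (δ j) ∧
      0 ≤ 1 - (1 / msStar δ j.castSucc) *
          ∑ k, d k * Pcond δ k j.castSucc * (1 - Pcond δ k j.castSucc) := by
  intro δ j
  set jc := j.castSucc with hjc
  set w : Fin (n + 1) → ℝ := Fin.snoc δ 0 with hw
  set N : Fin K → ℝ → ℝ := fun k t => P k jc * Real.exp (t + u jc k) with hN
  set C : Fin K → ℝ := fun k => ∑ l ∈ Finset.univ.erase jc, P k l * Real.exp (w l + u l k)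
    with hC
  set M : Fin K → ℝ → ℝ := fun k t => N k t + C k with hM
  have hNpos : ∀ k t, 0 < N k t := fun k t => mul_pos (hP0 k jc) (Real.exp_pos _)
  have hCpos : ∀ k, 0 < C k := by
    intro k
    apply Finset.sum_pos
    · intro l _; exact mul_pos (hP0 k l) (Real.exp_pos _)
    · exact ⟨Fin.last n, Finset.mem_erase.mpr ⟨(Fin.castSucc_lt_last j).ne', Finset.mem_univ _⟩⟩
  have hMpos : ∀ k t, 0 < M k t := fun k t => add_pos (hNpos k t) (hCpos k)
  -- pointwise description of Pcond along the line
  have hPc : ∀ t k, Pcond (Function.update δ j t) k jc = N k t / M k t := by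
    intro t k
    rw [hPcond]
    have hsnoc : (Fin.snoc (Function.update δ j t) 0 : Fin (n + 1) → ℝ)
        = Function.update w jc t := by
      rw [hw, hjc]; exact Fin.snoc_update (α := fun _ => ℝ) 0 δ j t
    rw [hsnoc]
    have hden : ∑ l, P k l * Real.exp (Function.update w jc t l + u l k) = M k t := by
      rw [← Finset.sum_erase_add _ _ (Finset.mem_univ jc), Function.update_self, hM]
      rw [add_comm]
      congr 1
      apply Finset.sum_congr rfl
      intro l hl
      rw [Function.update_of_ne (Finset.ne_of_mem_erase hl)]
    rw [hden, Function.update_self]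
  have key : ∀ t, msStar (Function.update δ j t) jc = ∑ k, d k * (N k t / M k t) := by
    intro t
    rw [hmsStar]
    exact Finset.sum_congr rfl fun k _ => by rw [hPc]
  have hPceq : ∀ k, Pcond δ k jc = N k (δ j) / M k (δ j) := by
    intro k
    have := hPc (δ j) k
    rwa [Function.update_eq_self] at this
  have hmseq : msStar δ jc = ∑ k, d k * (N k (δ j) / M k (δ j)) := by
    have := key (δ j)
    rwa [Function.update_eq_self] at this
  -- positivity of msStar δ jc
  have hp01 : ∀ k, 0 < Pcond δ k jc := by
    intro k
    rw [hPceq]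
    exact div_pos (hNpos k (δ j)) (hMpos k (δ j))
  have hm0 : 0 < msStar δ jc := by
    rw [hmsStar]
    obtain ⟨k0, hk0⟩ : ∃ k, 0 < d k := by
      by_contra h
      push_neg at h
      have : ∀ k ∈ Finset.univ, d k = 0 := fun k _ => le_antisymm (h k) (hd0 k)
      rw [Finset.sum_congr rfl this] at hd1
      simp at hd1
    refine Finset.sum_pos' (fun k _ => mul_nonneg (hd0 k) (hp01 k).le) ⟨k0, Finset.mem_univ k0, ?_⟩
    exact mul_pos hk0 (hp01 k0)
  -- derivative of each N k, M k
  have hNderiv : ∀ k, HasDerivAt (N k) (N k (δ j)) (δ j) := by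
    intro k
    have h1 : HasDerivAt (fun t : ℝ => t + u jc k) 1 (δ j) := (hasDerivAt_id _).add_const _
    have h2 := h1.exp
    have h3 := h2.const_mul (P k jc)
    simpa [hN, mul_comm, mul_assoc] using h3
  have hMderiv : ∀ k, HasDerivAt (M k) (N k (δ j)) (δ j) := fun k => (hNderiv k).add_const _
  have hQderiv : ∀ k, HasDerivAt (fun t => N k t / M k t)
      (Pcond δ k jc * (1 - Pcond δ k jc)) (δ j) := by
    intro k
    have h : HasDerivAt (fun t => N k t / M k t) _ (δ j) :=
      (hNderiv k).div (hMderiv k) (hMpos k (δ j)).ne'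
    convert h using 1
    rw [hPceq k]
    have hMne : M k (δ j) ≠ 0 := (hMpos k (δ j)).ne'
    field_simp
  -- derivative of S t = msStar (update δ j t) jc
  set D : ℝ := ∑ k, d k * Pcond δ k jc * (1 - Pcond δ k jc) with hD
  have hSderiv : HasDerivAt (fun t => ∑ k, d k * (N k t / M k t)) D (δ j) := by
    have h : HasDerivAt (fun t => ∑ k, d k * (N k t / M k t))
        (∑ k, d k * (Pcond δ k jc * (1 - Pcond δ k jc))) (δ j) :=
      HasDerivAt.fun_sum fun k _ => (hQderiv k).const_mul (d k)
    convert h using 1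
    rw [hD]
    exact Finset.sum_congr rfl fun k _ => by ring
  -- the function T along the line
  have hfun : (fun t : ℝ => T (Function.update δ j t) j)
      = fun t => t + Real.log (ms jc) - Real.log (∑ k, d k * (N k t / M k t)) := by
    funext t
    rw [hT, Function.update_self, ← key t]
  have hS0 : (∑ k, d k * (N k (δ j) / M k (δ j))) = msStar δ jc := hmseq.symm
  have hTWderiv : HasDerivAt (fun t : ℝ => T (Function.update δ j t) j)
      (1 - (1 / msStar δ jc) * D) (δ j) := by
    rw [hfun]
    have hlog : HasDerivAt (fun t => Real.log (∑ k, d k * (N k t / M k t)))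
        (D / msStar δ jc) (δ j) := by
      have := hSderiv.log (by rw [hS0]; exact hm0.ne')
      rwa [hS0] at this
    have h : HasDerivAt (fun t => t + Real.log (ms jc) - Real.log (∑ k, d k * (N k t / M k t))) _ (δ j) :=
      ((hasDerivAt_id (δ j)).add_const (Real.log (ms jc))).sub hlog
    convert h using 1
    ring
  refine ⟨hTWderiv, ?_⟩
  -- nonnegativity
  have hDle : D ≤ msStar δ jc := by
    rw [hD, hmsStar]
    apply Finset.sum_le_sum
    intro k _
    have hp := (hp01 k).le
    have : Pcond δ k jc * (1 - Pcond δ k jc) ≤ Pcond δ k jc := by nlinarith [sq_nonneg (Pcond δ k jc)]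
    calc d k * Pcond δ k jc * (1 - Pcond δ k jc)
        = d k * (Pcond δ k jc * (1 - Pcond δ k jc)) := by ring
      _ ≤ d k * Pcond δ k jc := mul_le_mul_of_nonneg_left this (hd0 k)
  rw [sub_nonneg, one_div, ← div_eq_inv_mul]
  exact (div_le_one hm0).mpr hDle
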